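/- Let x_i be a generator of the free Lie algebra lie_n over a field k of characteristic zero, and let a ∈ lie_n satisfy ⁅x_i, a⁆ = 0. Then a is a scalar multiple of x_i: there exists c ∈ k with a = c • x_i. (The kernel of the operator ad_{x_i} on lie_n is exactly k·x_i.) -/

import Mathlib

open FreeLieAlgebra

attribute [local instance] LieRing.ofAssociativeRing

set_option linter.unusedSectionVars false

noncomputable section KerAd
variable (k : Type) [Field k] [CharZero k] (n : ℕ)

local notation "L" => FreeLieAlgebra k (Fin n)
local notation "B" => MonoidAlgebra k (FreeMonoid (Fin n))

def kerAdT (j : Fin n) : Module.End k (L × k) :=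
  (LinearMap.inl k L k).comp
    ((((LieAlgebra.ad k L) (of k j)) : L →ₗ[k] L).comp (LinearMap.fst k L k) +
      (LinearMap.snd k L k).smulRight (of k j))

lemma kerAdT_apply (j : Fin n) (m : L × k) :
    kerAdT k n j m = (⁅of k j, m.1⁆ + m.2 • of k j, (0:k)) := rfl

def kerAdTheta : B →ₐ[k] Module.End k (L × k) :=
  MonoidAlgebra.lift k _ (FreeMonoid (Fin n)) (FreeMonoid.lift (kerAdT k n))

def kerAdPhi : L →ₗ⁅k⁆ B :=
  FreeLieAlgebra.lift k fun j => MonoidAlgebra.of k (FreeMonoid (Fin n)) (FreeMonoid.of j)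

def kerAdSigma : B →ₐ[k] Module.End k L :=
  MonoidAlgebra.lift k _ (FreeMonoid (Fin n))
    (FreeMonoid.lift fun j => ((LieAlgebra.ad k L) (of k j) : Module.End k L))

/-- word-level version of L1 -/
lemma kerAdT_word (w : FreeMonoid (Fin n)) (a : L) :
    FreeMonoid.lift (kerAdT k n) w (a, (0:k)) =
      (FreeMonoid.lift (fun j => ((LieAlgebra.ad k L) (of k j) : Module.End k L)) w a, (0:k)) := by
  induction w using FreeMonoid.inductionOn' with
  | one => simp
  | of_mul x xs ih =>
    rw [map_mul, map_mul]
    simp only [Module.End.mul_apply, ih, FreeMonoid.lift_eval_of, kerAdT_apply]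
    simp

lemma kerAdTheta_fst (v : B) (a : L) :
    kerAdTheta k n v (a, (0:k)) = (kerAdSigma k n v a, (0:k)) := by
  induction v using MonoidAlgebra.induction_linear with
  | zero => simp [kerAdTheta, kerAdSigma]; rfl
  | add f g hf hg =>
    rw [map_add, map_add]
    simp only [LinearMap.add_apply, hf, hg, Prod.mk_add_mk, add_zero]
  | single w r =>
    rw [kerAdTheta, kerAdSigma, MonoidAlgebra.lift_single, MonoidAlgebra.lift_single]
    simp only [LinearMap.smul_apply, kerAdT_word, Prod.smul_mk, smul_zero]

end KerAd

noncomputable section KerAd2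
variable (k : Type) [Field k] [CharZero k] (n : ℕ)

local notation "L" => FreeLieAlgebra k (Fin n)
local notation "B" => MonoidAlgebra k (FreeMonoid (Fin n))

def kerAdE : (FreeLieAlgebra k (Fin n)) × k := (0, 1)

def kerAdRho (u : B) : L := (kerAdTheta k n u (kerAdE k n)).1

def kerAdEps (u : B) : k := (kerAdTheta k n u (kerAdE k n)).2

lemma kerAdTheta_e (u : B) :
    kerAdTheta k n u (kerAdE k n) = (kerAdRho k n u, kerAdEps k n u) := rfl

lemma kerAdRho_add (u v : B) : kerAdRho k n (u + v) = kerAdRho k n u + kerAdRho k n v := by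
  simp [kerAdRho, map_add]

lemma kerAdRho_sub (u v : B) : kerAdRho k n (u - v) = kerAdRho k n u - kerAdRho k n v := by
  simp [kerAdRho, map_sub]

lemma kerAdEps_add (u v : B) : kerAdEps k n (u + v) = kerAdEps k n u + kerAdEps k n v := by
  simp [kerAdEps, map_add]

lemma kerAdEps_sub (u v : B) : kerAdEps k n (u - v) = kerAdEps k n u - kerAdEps k n v := by
  simp [kerAdEps, map_sub]

lemma kerAdEps_smul (t : k) (u : B) : kerAdEps k n (t • u) = t • kerAdEps k n u := by
  simp [kerAdEps, map_smul]

lemma kerAdRho_mul (u v : B) :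
    kerAdRho k n (u * v) =
      kerAdSigma k n u (kerAdRho k n v) + kerAdEps k n v • kerAdRho k n u ∧
    kerAdEps k n (u * v) = kerAdEps k n v * kerAdEps k n u := by
  have h1 : kerAdTheta k n (u * v) (kerAdE k n)
      = kerAdTheta k n u (kerAdTheta k n v (kerAdE k n)) := by
    rw [map_mul]; rfl
  rw [kerAdTheta_e k n (u * v), kerAdTheta_e k n v] at h1
  have h2 : ((kerAdRho k n v : L), kerAdEps k n v)
      = ((kerAdRho k n v, (0:k)) : L × k) + kerAdEps k n v • kerAdE k n := by
    simp [kerAdE, Prod.ext_iff]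
  rw [h2, map_add, LinearMap.map_smul, kerAdTheta_fst, kerAdTheta_e] at h1
  have h1' := h1
  apply_fun Prod.fst at h1
  apply_fun Prod.snd at h1'
  constructor
  · simpa using h1
  · simpa using h1'

lemma kerAdSigma_phi (a : L) :
    kerAdSigma k n (kerAdPhi k n a) = (LieAlgebra.ad k L) a := by
  have : ((kerAdSigma k n).toLieHom.comp (kerAdPhi k n)) = LieAlgebra.ad k L := by
    apply FreeLieAlgebra.hom_ext
    intro j
    simp only [LieHom.comp_apply, AlgHom.toLieHom_apply, kerAdPhi, lift_of_apply]
    rw [show (MonoidAlgebra.of k (FreeMonoid (Fin n)) (FreeMonoid.of j))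
        = MonoidAlgebra.single (FreeMonoid.of j) 1 from rfl]
    rw [kerAdSigma, MonoidAlgebra.lift_single]
    simp [FreeMonoid.lift_eval_of]
  exact LieHom.congr_fun this a

lemma kerAdEps_phi (a : L) : kerAdEps k n (kerAdPhi k n a) = 0 := by
  let G : FreeLieAlgebra k (Fin n) →ₗ⁅k⁆ k :=
    { toFun := fun a => kerAdEps k n (kerAdPhi k n a)
      map_add' := by
        intro a b
        show kerAdEps k n (kerAdPhi k n (a + b)) = _
        rw [map_add]; exact kerAdEps_add k n _ _
      map_smul' := by
        intro t a
        show kerAdEps k n (kerAdPhi k n (t • a)) = _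
        rw [map_smul]; exact kerAdEps_smul k n t _
      map_lie' := by
        intro a b
        show kerAdEps k n (kerAdPhi k n ⁅a, b⁆)
          = ⁅kerAdEps k n (kerAdPhi k n a), kerAdEps k n (kerAdPhi k n b)⁆
        rw [LieHom.map_lie, Ring.lie_def, kerAdEps_sub,
          (kerAdRho_mul k n (kerAdPhi k n a) (kerAdPhi k n b)).2,
          (kerAdRho_mul k n (kerAdPhi k n b) (kerAdPhi k n a)).2, Ring.lie_def]
        ring }
  have hG : G = FreeLieAlgebra.lift k (fun _ => (0:k)) := by
    apply FreeLieAlgebra.hom_ext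
    intro j
    simp only [lift_of_apply]
    show kerAdEps k n (kerAdPhi k n (of k j)) = 0
    rw [kerAdPhi, lift_of_apply]
    rw [show (MonoidAlgebra.of k (FreeMonoid (Fin n)) (FreeMonoid.of j))
        = MonoidAlgebra.single (FreeMonoid.of j) 1 from rfl]
    rw [kerAdEps, kerAdTheta, MonoidAlgebra.lift_single]
    simp [FreeMonoid.lift_eval_of, kerAdT_apply, kerAdE]
  have h0 : FreeLieAlgebra.lift k (fun _ => (0:k)) = (0 : FreeLieAlgebra k (Fin n) →ₗ⁅k⁆ k) := by
    apply FreeLieAlgebra.hom_ext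
    intro j
    simp [lift_of_apply]
  have := LieHom.congr_fun (hG.trans h0) a
  simpa [G] using this

def kerAdD (a : L) : L := kerAdRho k n (kerAdPhi k n a)

lemma kerAdD_lie (a b : L) :
    kerAdD k n ⁅a, b⁆ = ⁅a, kerAdD k n b⁆ + ⁅kerAdD k n a, b⁆ := by
  unfold kerAdD
  rw [LieHom.map_lie, Ring.lie_def]
  have : kerAdRho k n (kerAdPhi k n a * kerAdPhi k n b - kerAdPhi k n b * kerAdPhi k n a)
      = kerAdRho k n (kerAdPhi k n a * kerAdPhi k n b)
        - kerAdRho k n (kerAdPhi k n b * kerAdPhi k n a) := kerAdRho_sub k n _ _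
  rw [this, (kerAdRho_mul k n _ _).1, (kerAdRho_mul k n _ _).1,
    kerAdSigma_phi, kerAdSigma_phi, kerAdEps_phi, kerAdEps_phi]
  simp [LieAlgebra.ad_apply, sub_eq_add_neg, add_comm]

lemma kerAdD_of (j : Fin n) : kerAdD k n (of k j) = of k j := by
  unfold kerAdD kerAdRho
  rw [kerAdPhi, lift_of_apply]
  rw [show (MonoidAlgebra.of k (FreeMonoid (Fin n)) (FreeMonoid.of j))
      = MonoidAlgebra.single (FreeMonoid.of j) 1 from rfl]
  rw [kerAdTheta, MonoidAlgebra.lift_single]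
  simp [FreeMonoid.lift_eval_of, kerAdT_apply, kerAdE]

end KerAd2

noncomputable section KerAd3
variable (k : Type) [Field k] [CharZero k] (n : ℕ)

local notation "L" => FreeLieAlgebra k (Fin n)
local notation "B" => MonoidAlgebra k (FreeMonoid (Fin n))
local notation "lib" => FreeNonUnitalNonAssocAlgebra

lemma kerAdRho_smul (t : k) (u : B) : kerAdRho k n (t • u) = t • kerAdRho k n u := by
  simp [kerAdRho, map_smul]

lemma kerAdD_add (a b : L) : kerAdD k n (a + b) = kerAdD k n a + kerAdD k n b := by
  unfold kerAdD; rw [map_add, kerAdRho_add]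

lemma kerAdD_smul (t : k) (a : L) : kerAdD k n (t • a) = t • kerAdD k n a := by
  unfold kerAdD; rw [map_smul, kerAdRho_smul]

/-- `kerAdD` as an endomorphism. -/
def kerAdDl : Module.End k L where
  toFun := kerAdD k n
  map_add' := kerAdD_add k n
  map_smul' := kerAdD_smul k n

lemma lie_smul' (c : k) (x y : L) : ⁅x, c • y⁆ = c • ⁅x, y⁆ := by
  rw [← lie_skew, smul_lie, ← lie_skew x y, smul_neg]

/-- image in `L` of a free-magma word -/
def mkMag (w : FreeMagma (Fin n)) : L :=
  FreeLieAlgebra.mk k (MonoidAlgebra.single w (1:k))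

lemma mkMag_of (j : Fin n) : mkMag k n (FreeMagma.of j) = of k j := rfl

lemma mkMag_mul (u v : FreeMagma (Fin n)) :
    mkMag k n (u * v) = ⁅mkMag k n u, mkMag k n v⁆ := by
  unfold mkMag
  rw [show (MonoidAlgebra.single (u * v) (1:k))
      = MonoidAlgebra.single u (1:k) * MonoidAlgebra.single v (1:k) by
    rw [MonoidAlgebra.single_mul_single, one_mul]]
  exact map_mul (FreeLieAlgebra.mk k) _ _

lemma kerAdD_mkMag (w : FreeMagma (Fin n)) :
    kerAdD k n (mkMag k n w) = (w.length : k) • mkMag k n w := by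
  induction w with
  | ih1 j => rw [mkMag_of, kerAdD_of]; simp
  | ih2 u v ihu ihv =>
    rw [mkMag_mul, kerAdD_lie, ihu, ihv]
    rw [lie_smul', smul_lie]
    have : ((u * v).length : k) = (u.length : k) + (v.length : k) := by
      show ((u.length + v.length : ℕ) : k) = _
      push_cast; ring
    rw [this, add_smul]
    abel

lemma kerAdD_homog (m : ℕ) (b : lib k (Fin n))
    (hb : ∀ w ∈ b.coeff.support, FreeMagma.length w = m) :
    kerAdD k n (FreeLieAlgebra.mk k b) = (m : k) • FreeLieAlgebra.mk k b := by
  have hrep : FreeLieAlgebra.mk k b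
      = ∑ w ∈ b.coeff.support, b.coeff w • mkMag k n w := by
    conv_lhs => rw [← MonoidAlgebra.sum_coeff_single b]
    rw [Finsupp.sum, map_sum]
    refine Finset.sum_congr rfl fun w hw => ?_
    rw [show (MonoidAlgebra.single w (b.coeff w) : lib k (Fin n))
        = b.coeff w • MonoidAlgebra.single w (1:k) by rw [MonoidAlgebra.smul_single, smul_eq_mul, mul_one]]
    rw [map_smul]
    rfl
  rw [hrep]
  have : kerAdD k n (∑ w ∈ b.coeff.support, b.coeff w • mkMag k n w)
      = ∑ w ∈ b.coeff.support, b.coeff w • kerAdD k n (mkMag k n w) := by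
    rw [show kerAdD k n (∑ w ∈ b.coeff.support, b.coeff w • mkMag k n w)
        = kerAdDl k n (∑ w ∈ b.coeff.support, b.coeff w • mkMag k n w) from rfl, map_sum]
    refine Finset.sum_congr rfl fun w hw => ?_
    rw [LinearMap.map_smul]; rfl
  rw [this]; refine Eq.trans ?_ Finset.smul_sum.symm
  refine Finset.sum_congr rfl fun w hw => ?_
  rw [kerAdD_mkMag, hb w hw, smul_comm]

end KerAd3

section KerAd4
variable (k : Type) [Field k] [CharZero k] (n : ℕ)

local notation "L" => FreeLieAlgebra k (Fin n)
local notation "B" => MonoidAlgebra k (FreeMonoid (Fin n))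

lemma mul_single_one_eq (u : B) (g : FreeMonoid (Fin n)) :
    (u * MonoidAlgebra.single g (1:k)).coeff = Finsupp.mapDomain (· * g) u.coeff := by
  rw [MonoidAlgebra.mul_def, MonoidAlgebra.coeff_finsuppSum, Finsupp.mapDomain]
  refine Finsupp.sum_congr fun w hw => ?_
  rw [MonoidAlgebra.coeff_single, Finsupp.sum_single_index (by simp), mul_one, MonoidAlgebra.coeff_single]

lemma single_one_mul_eq (u : B) (g : FreeMonoid (Fin n)) :
    (MonoidAlgebra.single g (1:k) * u).coeff = Finsupp.mapDomain (g * ·) u.coeff := by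
  rw [MonoidAlgebra.mul_def, MonoidAlgebra.coeff_single, Finsupp.sum_single_index (by simp),
    MonoidAlgebra.coeff_finsuppSum, Finsupp.mapDomain]
  refine Finsupp.sum_congr fun w hw => ?_
  rw [one_mul, MonoidAlgebra.coeff_single]

variable (i : Fin n)

lemma mulRightInj : Function.Injective (fun z : FreeMonoid (Fin n) => z * FreeMonoid.of i) :=
  fun x y hxy => mul_left_injective (FreeMonoid.of i) hxy

lemma mulLeftInj : Function.Injective (fun z : FreeMonoid (Fin n) => FreeMonoid.of i * z) :=
  fun x y hxy => mul_right_injective (FreeMonoid.of i) hxy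

variable {u : MonoidAlgebra k (FreeMonoid (Fin n))}
  (hcomm : Finsupp.mapDomain (fun z => FreeMonoid.of i * z) u.coeff
    = Finsupp.mapDomain (fun z => z * FreeMonoid.of i) u.coeff)

include hcomm in
lemma kerAd_rot (w : FreeMonoid (Fin n)) :
    u.coeff (FreeMonoid.of i * w) = u.coeff (w * FreeMonoid.of i) := by
  have h1 : Finsupp.mapDomain (fun z => FreeMonoid.of i * z) u.coeff
      (FreeMonoid.of i * (w * FreeMonoid.of i)) = u.coeff (w * FreeMonoid.of i) :=
    Finsupp.mapDomain_apply (mulLeftInj n i) u.coeff _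
  have h2 : Finsupp.mapDomain (fun z => z * FreeMonoid.of i) u.coeff
      ((FreeMonoid.of i * w) * FreeMonoid.of i) = u.coeff (FreeMonoid.of i * w) :=
    Finsupp.mapDomain_apply (mulRightInj n i) u.coeff _
  rw [← h1, ← h2, hcomm, mul_assoc]

include hcomm in
lemma kerAd_head (w : FreeMonoid (Fin n)) (hw : w ≠ 1)
    (hw2 : ∀ v, w ≠ FreeMonoid.of i * v) : u.coeff w = 0 := by
  have h2 : Finsupp.mapDomain (fun z => z * FreeMonoid.of i) u.coeff
      (w * FreeMonoid.of i) = u.coeff w :=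
    Finsupp.mapDomain_apply (mulRightInj n i) u.coeff _
  have h1 : Finsupp.mapDomain (fun z => FreeMonoid.of i * z) u.coeff
      (w * FreeMonoid.of i) = 0 := by
    apply Finsupp.mapDomain_notin_range
    rintro ⟨z, hz⟩
    -- hz : of i * z = w * of i
    obtain ⟨x, t, ht⟩ : ∃ x t, FreeMonoid.toList w = x :: t := by
      cases hlw : FreeMonoid.toList w with
      | nil =>
        exfalso; apply hw
        rw [← FreeMonoid.ofList_toList w, hlw]; rfl
      | cons x t => exact ⟨x, t, rfl⟩
    have hz' : FreeMonoid.of i * z = w * FreeMonoid.of i := hz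
    have hlist : FreeMonoid.toList (FreeMonoid.of i * z)
        = FreeMonoid.toList (w * FreeMonoid.of i) := by rw [hz']
    rw [FreeMonoid.toList_of_mul, FreeMonoid.toList_mul, ht] at hlist
    have hx : x = i := by
      have := congrArg List.head? hlist
      simpa using this.symm
    apply hw2 (FreeMonoid.ofList t)
    rw [← FreeMonoid.ofList_toList w, ht, hx]
    rfl
  rw [← h2, ← hcomm, h1]

end KerAd4

section KerAd5
variable (k : Type) [Field k] [CharZero k] (n : ℕ) (i : Fin n)
variable {u : MonoidAlgebra k (FreeMonoid (Fin n))}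
  (hcomm : Finsupp.mapDomain (fun z => FreeMonoid.of i * z) u.coeff
    = Finsupp.mapDomain (fun z => z * FreeMonoid.of i) u.coeff)

include hcomm in
lemma kerAd_rot_pow (p : ℕ) :
    ∀ s : FreeMonoid (Fin n), u.coeff (FreeMonoid.of i ^ p * s) = u.coeff (s * FreeMonoid.of i ^ p) := by
  induction p with
  | zero => intro s; rw [pow_zero, one_mul, mul_one]
  | succ p ih =>
    intro s
    calc u.coeff (FreeMonoid.of i ^ (p + 1) * s)
        = u.coeff (FreeMonoid.of i * (FreeMonoid.of i ^ p * s)) := by rw [pow_succ', mul_assoc]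
      _ = u.coeff ((FreeMonoid.of i ^ p * s) * FreeMonoid.of i) := kerAd_rot k n i hcomm _
      _ = u.coeff (FreeMonoid.of i ^ p * (s * FreeMonoid.of i)) := by rw [mul_assoc]
      _ = u.coeff ((s * FreeMonoid.of i) * FreeMonoid.of i ^ p) := ih _
      _ = u.coeff (s * FreeMonoid.of i ^ (p + 1)) := by rw [mul_assoc, ← pow_succ']

lemma head_dropWhile_false {α : Type*} (p : α → Bool) :
    ∀ (l : List α) (x : α) (rest : List α), l.dropWhile p = x :: rest → p x = false := by
  intro l
  induction l with
  | nil => intro x rest h; simp [List.dropWhile] at h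
  | cons a l ih =>
    intro x rest h
    rw [List.dropWhile_cons] at h
    by_cases hp : p a = true
    · rw [if_pos hp] at h; exact ih x rest h
    · rw [if_neg hp] at h
      cases h
      simpa using hp

lemma ofList_replicate (p : ℕ) :
    FreeMonoid.ofList (List.replicate p i) = FreeMonoid.of i ^ p := by
  induction p with
  | zero => rfl
  | succ m ih =>
    rw [List.replicate_succ, pow_succ',
      show FreeMonoid.ofList (i :: List.replicate m i)
        = FreeMonoid.of i * FreeMonoid.ofList (List.replicate m i) from rfl, ih]

include hcomm in
lemma kerAd_support_pow (w : FreeMonoid (Fin n)) (hw : u.coeff w ≠ 0) :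
    w = FreeMonoid.of i ^ w.length := by
  set l := FreeMonoid.toList w with hl
  by_cases hall : ∀ x ∈ l, x = i
  · have hrep : l = List.replicate l.length i := List.eq_replicate_length.mpr hall
    have hthis : w = FreeMonoid.ofList (List.replicate l.length i) := by
      rw [← hrep, hl, FreeMonoid.ofList_toList]
    rw [show FreeMonoid.length w = l.length from rfl, hthis, ofList_replicate]
  · exfalso
    apply hw
    push_neg at hall
    set P : Fin n → Bool := fun x => decide (x = i) with hP
    have hsplit : l.takeWhile P ++ l.dropWhile P = l := List.takeWhile_append_dropWhile
    have htake : ∀ x ∈ l.takeWhile P, x = i := fun x hx => by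
      have := List.mem_takeWhile_imp hx
      rw [hP] at this; simpa using this
    have hdropne : l.dropWhile P ≠ [] := by
      rw [Ne, List.dropWhile_eq_nil_iff]
      push_neg
      obtain ⟨x, hx, hxi⟩ := hall
      exact ⟨x, hx, by simp [hP, hxi]⟩
    obtain ⟨x, rest, hxr⟩ : ∃ x rest, l.dropWhile P = x :: rest := by
      cases hd : l.dropWhile P with
      | nil => exact absurd hd hdropne
      | cons x rest => exact ⟨x, rest, rfl⟩
    have hxi : x ≠ i := by
      have := head_dropWhile_false P l x rest hxr
      rw [hP] at this; simpa using this
    have htake' : l.takeWhile P = List.replicate (l.takeWhile P).length i :=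
      List.eq_replicate_length.mpr htake
    have hw' : w = FreeMonoid.of i ^ (l.takeWhile P).length
        * FreeMonoid.ofList (l.dropWhile P) := by
      conv_lhs => rw [← FreeMonoid.ofList_toList w, ← hl, ← hsplit]
      rw [show FreeMonoid.ofList (l.takeWhile P ++ l.dropWhile P)
          = FreeMonoid.ofList (l.takeWhile P) * FreeMonoid.ofList (l.dropWhile P) from rfl]
      conv_lhs => rw [htake']
      rw [ofList_replicate]
    rw [hw', kerAd_rot_pow k n i hcomm]
    apply kerAd_head k n i hcomm
    · intro hcontra
      have := congrArg FreeMonoid.toList hcontra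
      rw [FreeMonoid.toList_mul, hxr] at this
      simp at this
    · intro v hcontra
      have := congrArg FreeMonoid.toList hcontra
      rw [FreeMonoid.toList_mul, hxr, FreeMonoid.toList_of_mul] at this
      have := congrArg List.head? this
      simp at this
      exact hxi this
end KerAd5

noncomputable section KerAd6
variable (k : Type) [Field k] [CharZero k] (n : ℕ) (i : Fin n)

local notation "L" => FreeLieAlgebra k (Fin n)
local notation "B" => MonoidAlgebra k (FreeMonoid (Fin n))

lemma kerAdT_pow_e (m : ℕ) :
    ((kerAdT k n i) ^ (m + 2)) (kerAdE k n) = 0 := by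
  have h2 : ((kerAdT k n i) ^ 2) (kerAdE k n) = 0 := by
    rw [pow_two, Module.End.mul_apply]
    rw [show (kerAdT k n i) (kerAdE k n) = (of k i, (0:k)) by
      rw [kerAdT_apply]; simp [kerAdE]]
    rw [kerAdT_apply]
    simp
  rw [pow_add, Module.End.mul_apply, h2, map_zero]

lemma kerAdRho_single_pow (m : ℕ) (r : k) :
    kerAdRho k n (MonoidAlgebra.single (FreeMonoid.of i ^ m) r)
      ∈ Submodule.span k {of k i} := by
  have hsingle : kerAdRho k n (MonoidAlgebra.single (FreeMonoid.of i ^ m) r)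
      = r • (((kerAdT k n i) ^ m) (kerAdE k n)).1 := by
    rw [kerAdRho, kerAdTheta, MonoidAlgebra.lift_single]
    rw [show (FreeMonoid.lift (kerAdT k n)) (FreeMonoid.of i ^ m) = (kerAdT k n i) ^ m by
      rw [map_pow, FreeMonoid.lift_eval_of]]
    rfl
  rw [hsingle]
  match m with
  | 0 =>
    rw [pow_zero]
    simp [kerAdE]
  | 1 =>
    rw [pow_one]
    rw [show (kerAdT k n i) (kerAdE k n) = (of k i, (0:k)) by
      rw [kerAdT_apply]; simp [kerAdE]]
    exact Submodule.smul_mem _ r (Submodule.mem_span_singleton_self _)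
  | (m + 2) =>
    rw [kerAdT_pow_e]
    simp

end KerAd6

noncomputable section KerAd7
variable (k : Type) [Field k] [CharZero k] (n : ℕ) (i : Fin n)

local notation "L" => FreeLieAlgebra k (Fin n)

lemma kerAdRho_finset_sum {α : Type*} (s : Finset α) (g : α → MonoidAlgebra k (FreeMonoid (Fin n))) :
    kerAdRho k n (∑ x ∈ s, g x) = ∑ x ∈ s, kerAdRho k n (g x) := by
  unfold kerAdRho
  rw [map_sum, LinearMap.sum_apply]
  exact Prod.fst_sum

/-- If `a` commutes with the generator then `D a` lies in the span of the generator. -/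
lemma kerAdD_mem_span (a : FreeLieAlgebra k (Fin n)) (h : ⁅of k i, a⁆ = 0) :
    kerAdD k n a ∈ Submodule.span k {of k i} := by
  set u := kerAdPhi k n a with hu
  have hXi : kerAdPhi k n (of k i)
      = MonoidAlgebra.single (FreeMonoid.of i) (1:k) := by
    rw [kerAdPhi, lift_of_apply]; rfl
  have hlie : MonoidAlgebra.single (FreeMonoid.of i) (1:k) * u
      - u * MonoidAlgebra.single (FreeMonoid.of i) (1:k) = 0 := by
    have := (kerAdPhi k n).map_lie (of k i) a
    rw [h, map_zero, hXi] at this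
    rw [← Ring.lie_def]
    exact this.symm
  have hcomm : Finsupp.mapDomain (fun z => FreeMonoid.of i * z) u.coeff
      = Finsupp.mapDomain (fun z => z * FreeMonoid.of i) u.coeff := by
    rw [← single_one_mul_eq, ← mul_single_one_eq]
    exact congrArg MonoidAlgebra.coeff (sub_eq_zero.mp hlie)
  have hDa : kerAdD k n a = kerAdRho k n u := rfl
  have hurep : u = ∑ w ∈ u.coeff.support, MonoidAlgebra.single w (u.coeff w) := by
    conv_lhs => rw [← MonoidAlgebra.sum_coeff_single u]
    rfl
  rw [hDa, hurep, kerAdRho_finset_sum]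
  refine Submodule.sum_mem _ fun w hw => ?_
  have hwpow : w = FreeMonoid.of i ^ w.length :=
    kerAd_support_pow k n i hcomm w (Finsupp.mem_support_iff.mp hw)
  rw [show (MonoidAlgebra.single w (u.coeff w) : MonoidAlgebra k (FreeMonoid (Fin n)))
      = MonoidAlgebra.single (FreeMonoid.of i ^ w.length) (u.coeff w) by rw [← hwpow]]
  exact kerAdRho_single_pow k n i _ _
end KerAd7

section KerAdFinal
variable (k : Type) [Field k] [CharZero k] (n : ℕ)

lemma kerAd_aeval_eigen (v : FreeLieAlgebra k (Fin n)) (μ : k)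
    (hv : kerAdDl k n v = μ • v) (q : Polynomial k) :
    Polynomial.aeval (kerAdDl k n) q v = q.eval μ • v := by
  rcases eq_or_ne v 0 with rfl | hne
  · simp
  · exact Module.End.aeval_apply_of_hasEigenvector
      ⟨Module.End.mem_eigenspace_iff.mpr hv, hne⟩

end KerAdFinal


/-- The kernel of `ad_{x_i}` on the free Lie algebra `lie_n` is exactly `k·x_i`:
if `⁅x_i, a⁆ = 0` then `a` is a scalar multiple of the generator `x_i`. -/
theorem ker_ad_generator (k : Type) [Field k] [CharZero k] (n : ℕ) (i : Fin n)
    (a : FreeLieAlgebra k (Fin n)) (h : ⁅of k i, a⁆ = 0) :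
    ∃ c : k, a = c • of k i := by
  classical
  obtain ⟨c, hc⟩ := Submodule.mem_span_singleton.mp (kerAdD_mem_span k n i a h)
  refine ⟨c, ?_⟩
  set b := a - c • of k i with hb
  have hDb : kerAdDl k n b = (0:k) • b := by
    show kerAdD k n (a - c • of k i) = (0:k) • b
    rw [sub_eq_add_neg, ← neg_smul, kerAdD_add, kerAdD_smul, kerAdD_of, ← hc, zero_smul,
      neg_smul, add_neg_cancel]
  obtain ⟨bb, hbb⟩ := Quot.exists_rep b
  have hmk : FreeLieAlgebra.mk k bb = b := hbb
  set S := bb.coeff.support.image FreeMagma.length with hS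
  set f : ℕ → FreeLieAlgebra k (Fin n) :=
    fun m => FreeLieAlgebra.mk k (MonoidAlgebra.ofCoeff (Finsupp.filter (fun w => FreeMagma.length w = m) bb.coeff)) with hf
  have hfilters : ∑ m ∈ S, MonoidAlgebra.ofCoeff (Finsupp.filter (fun w => FreeMagma.length w = m) bb.coeff) = bb := by
    ext w
    rw [MonoidAlgebra.coeff_sum, Finset.sum_apply']
    simp only [MonoidAlgebra.coeff_ofCoeff, Finsupp.filter_apply]
    rcases eq_or_ne (bb.coeff w) 0 with h0 | h0
    · rw [h0]; simp
    · rw [Finset.sum_ite_eq S (FreeMagma.length w) (fun _ => bb.coeff w)]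
      rw [if_pos (Finset.mem_image.mpr ⟨w, Finsupp.mem_support_iff.mpr h0, rfl⟩)]
  have hbsum : b = ∑ m ∈ S, f m := by
    rw [← hmk, hf]
    simp only []
    conv_lhs => rw [← hfilters]
    rw [map_sum]; rfl
  have heig : ∀ m ∈ S, kerAdDl k n (f m) = (m:k) • f m := by
    intro m hm
    refine kerAdD_homog k n m _ fun w hw => ?_
    rw [MonoidAlgebra.coeff_ofCoeff, Finsupp.support_filter] at hw
    exact (Finset.mem_filter.mp hw).2
  have h0S : ∀ m ∈ S, (m:k) ≠ 0 := by
    intro m hm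
    obtain ⟨w, hw, rfl⟩ := Finset.mem_image.mp hm
    exact Nat.cast_ne_zero.mpr (Nat.pos_iff_ne_zero.mp (FreeMagma.length_pos w))
  set q : Polynomial k := ∏ m ∈ S, (Polynomial.X - Polynomial.C (m:k)) with hq
  have h1 : Polynomial.aeval (kerAdDl k n) q b = q.eval 0 • b :=
    kerAd_aeval_eigen k n b 0 hDb q
  have h2 : Polynomial.aeval (kerAdDl k n) q b = 0 := by
    conv_lhs => rw [hbsum]
    rw [map_sum]
    refine Finset.sum_eq_zero fun m hm => ?_
    rw [kerAd_aeval_eigen k n (f m) (m:k) (heig m hm) q]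
    rw [show q.eval (m:k) = 0 by
      rw [hq, Polynomial.eval_prod]
      refine Finset.prod_eq_zero hm ?_
      simp]
    simp
  have hq0 : q.eval 0 ≠ 0 := by
    rw [hq, Polynomial.eval_prod]
    refine Finset.prod_ne_zero_iff.mpr fun m hm => ?_
    simp only [Polynomial.eval_sub, Polynomial.eval_X, Polynomial.eval_C, zero_sub, neg_ne_zero]
    exact h0S m hm
  have hb0 : b = 0 := by
    have h3 : q.eval 0 • b = 0 := h1.symm.trans h2
    rcases smul_eq_zero.mp h3 with h4 | h4
    · exact absurd h4 hq0
    · exact h4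
  rw [hb] at hb0
  exact sub_eq_zero.mp hb0
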